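/- For the RLC circuit with twice-differentiable signals, the tangent-space stored energy E_t(t) = (1/2) L i'(t)² + (1/2) C v'(t)² satisfies the tangent-space energy balance E_t'(t) = -R i'(t)² + u'(t) i'(t) + v'(t) · (d/dt)(-P(t)/v(t)) for all t, i.e., E_t' equals minus twice the tangent-space dissipation D_t = (1/2) R i'², plus the tangent-space control power P_t^u = u' i', plus the tangent-space port power P_t^r = (d/dt)(-P/v) · v'. -/
import Mathlib


/-- For the series RLC circuit with twice-differentiable signals,
the tangent-space stored energy `E_t t = (1/2) L (i' t)^2 + (1/2) C (v' t)^2`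
satisfies `E_t' t = -R (i' t)^2 + u' t * i' t + v' t * (d/dt)(-P/v) t`. -/
theorem rlc_tangent_energy_balance
    (R L C : ℝ) (hR : 0 < R) (hL : 0 < L) (hC : 0 < C)
    (i v u P : ℝ → ℝ)
    (hi : Differentiable ℝ i) (hi' : Differentiable ℝ (deriv i))
    (hv : Differentiable ℝ v) (hv' : Differentiable ℝ (deriv v))
    (hu : Differentiable ℝ u) (hu' : Differentiable ℝ (deriv u))
    (hP : Differentiable ℝ P) (hP' : Differentiable ℝ (deriv P))
    (hvne : ∀ t : ℝ, v t ≠ 0)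
    (hdyn₁ : ∀ t : ℝ, L * deriv i t = -R * i t - v t + u t)
    (hdyn₂ : ∀ t : ℝ, C * deriv v t = i t - P t / v t)
    (Et : ℝ → ℝ)
    (hEt : ∀ t : ℝ, Et t = (1/2) * L * (deriv i t)^2 + (1/2) * C * (deriv v t)^2) :
    ∀ t : ℝ, HasDerivAt Et
      (-R * (deriv i t)^2 + deriv u t * deriv i t
        + deriv v t * deriv (fun s => -P s / v s) t) t := by
  intro t
  have hfun : Et = fun s => (1/2) * L * (deriv i s)^2 + (1/2) * C * (deriv v s)^2 :=
    funext hEt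
  have hii : HasDerivAt (deriv i) (deriv (deriv i) t) t := (hi' t).hasDerivAt
  have hvv : HasDerivAt (deriv v) (deriv (deriv v) t) t := (hv' t).hasDerivAt
  have hE : HasDerivAt Et
      ((1/2)*L*((2:ℕ)*(deriv i t)^1 * deriv (deriv i) t)
        + (1/2)*C*((2:ℕ)*(deriv v t)^1 * deriv (deriv v) t)) t := by
    rw [hfun]
    exact ((hii.pow 2).const_mul ((1/2)*L)).add ((hvv.pow 2).const_mul ((1/2)*C))
  -- differentiate dynamics 1
  have h1 : L * deriv (deriv i) t = -R * deriv i t - deriv v t + deriv u t := by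
    have hfe : (fun s => L * deriv i s) = fun s => -R * i s - v s + u s :=
      funext hdyn₁
    have hr : HasDerivAt (fun s => -R * i s - v s + u s)
        (-R * deriv i t - deriv v t + deriv u t) t :=
      (((hi t).hasDerivAt.const_mul (-R)).sub (hv t).hasDerivAt).add (hu t).hasDerivAt
    have hl : HasDerivAt (fun s => L * deriv i s) (L * deriv (deriv i) t) t :=
      hii.const_mul L
    rw [hfe] at hl
    exact hl.unique hr
  -- differentiate dynamics 2
  have hdivd : HasDerivAt (fun s => P s / v s)
      (deriv (fun s => P s / v s) t) t := by
    exact (((hP t).div (hv t) (hvne t)) : DifferentiableAt ℝ _ t).hasDerivAt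
  have h2 : C * deriv (deriv v) t = deriv i t - deriv (fun s => P s / v s) t := by
    have hfe : (fun s => C * deriv v s) = fun s => i s - P s / v s :=
      funext hdyn₂
    have hr : HasDerivAt (fun s => i s - P s / v s)
        (deriv i t - deriv (fun s => P s / v s) t) t :=
      (hi t).hasDerivAt.sub hdivd
    have hl : HasDerivAt (fun s => C * deriv v s) (C * deriv (deriv v) t) t :=
      hvv.const_mul C
    rw [hfe] at hl
    exact hl.unique hr
  have hD : deriv (fun s => -P s / v s) t = -deriv (fun s => P s / v s) t := by
    have : (fun s => -P s / v s) = fun s => -(P s / v s) := by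
      funext s; ring
    rw [this]
    exact hdivd.neg.deriv
  convert hE using 1
  rw [hD]
  push_cast
  linear_combination (-deriv i t) * h1 + (-deriv v t) * h2
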